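/- arXiv:2008.10316 — 4 statements merged into one kernel-verified Lean document; each statement's English description precedes it below -/
import Mathlib

section
/- Let d > 0 and let P₁, P₂, Q be paths (edge sets) with differentiable, non-decreasing, positive edge cost functions. Suppose τ_{P₁}(x) ≤ τ_{P₂}(x) and τ'_{P₁∩Q}(x) ≤ τ'_{P₂∩Q}(x) for all x ∈ [0,d] (i.e., P₁ dominates P₂). Then for all x ∈ [0,d], C_{P₁}(x) ≤ C_{P₂}(x), where C_P(x) = x·τ_{P\Q}(x) + (d-x)·τ_{Q\P}(d-x) + d·τ_{P∩Q}(d). -/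
/-- If `P₁` dominates `P₂` (pointwise `τ_{P₁} ≤ τ_{P₂}` and `τ'_{P₁∩Q} ≤ τ'_{P₂∩Q}`
on `[0,d]`), then `C_{P₁}(x) ≤ C_{P₂}(x)` for all `x ∈ [0,d]`. -/
theorem stmt_9 {E : Type*} [DecidableEq E] (d : ℝ) (hd : 0 < d)
    (P₁ P₂ Q : Finset E) (τ : E → ℝ → ℝ)
    (hdiff : ∀ e : E, Differentiable ℝ (τ e))
    (hmono : ∀ e : E, MonotoneOn (τ e) (Set.Icc 0 d))
    (hpos : ∀ e : E, ∀ x ∈ Set.Icc (0 : ℝ) d, 0 < τ e x)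
    (hdom₁ : ∀ x ∈ Set.Icc (0 : ℝ) d, (∑ e ∈ P₁, τ e x) ≤ ∑ e ∈ P₂, τ e x)
    (hdom₂ : ∀ x ∈ Set.Icc (0 : ℝ) d,
      (∑ e ∈ P₁ ∩ Q, deriv (τ e) x) ≤ ∑ e ∈ P₂ ∩ Q, deriv (τ e) x) :
    ∀ x ∈ Set.Icc (0 : ℝ) d,
      x * (∑ e ∈ P₁ \ Q, τ e x) + (d - x) * (∑ e ∈ Q \ P₁, τ e (d - x))
          + d * (∑ e ∈ P₁ ∩ Q, τ e d) ≤
        x * (∑ e ∈ P₂ \ Q, τ e x) + (d - x) * (∑ e ∈ Q \ P₂, τ e (d - x))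
          + d * (∑ e ∈ P₂ ∩ Q, τ e d) := by
  intro x hx
  obtain ⟨hx0, hxd⟩ := hx
  -- difference function on P∩Q
  set f : ℝ → ℝ := fun y => (∑ e ∈ P₂ ∩ Q, τ e y) - ∑ e ∈ P₁ ∩ Q, τ e y with hf
  have hdiff₁ : Differentiable ℝ fun y => ∑ e ∈ P₁ ∩ Q, τ e y :=
    Differentiable.fun_sum fun e _ => hdiff e
  have hdiff₂ : Differentiable ℝ fun y => ∑ e ∈ P₂ ∩ Q, τ e y :=
    Differentiable.fun_sum fun e _ => hdiff e
  have hfd : Differentiable ℝ f := hdiff₂.sub hdiff₁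
  have hderiv : ∀ y ∈ Set.Icc (0:ℝ) d, 0 ≤ deriv f y := by
    intro y hy
    have : deriv f y = (∑ e ∈ P₂ ∩ Q, deriv (τ e) y) - ∑ e ∈ P₁ ∩ Q, deriv (τ e) y := by
      rw [hf, deriv_fun_sub (hdiff₂ y) (hdiff₁ y), deriv_fun_sum (fun e _ => (hdiff e) y),
        deriv_fun_sum (fun e _ => (hdiff e) y)]
    rw [this]
    exact sub_nonneg.2 (hdom₂ y hy)
  have hmonof : MonotoneOn f (Set.Icc 0 d) := by
    apply monotoneOn_of_deriv_nonneg (convex_Icc 0 d) hfd.continuous.continuousOn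
      (hfd.differentiableOn)
    intro y hy
    exact hderiv y (interior_subset hy)
  have hdx : d - x ∈ Set.Icc (0:ℝ) d := ⟨by linarith, by linarith⟩
  have hdmem : d ∈ Set.Icc (0:ℝ) d := ⟨le_of_lt hd, le_refl d⟩
  have h1 : f x ≤ f d := hmonof ⟨hx0, hxd⟩ hdmem hxd
  have h2 : f (d - x) ≤ f d := hmonof hdx hdmem (by linarith)
  -- rewrite sums over differences
  have e1 : ∀ P : Finset E, ∀ y : ℝ, (∑ e ∈ P \ Q, τ e y)
      = (∑ e ∈ P, τ e y) - ∑ e ∈ P ∩ Q, τ e y := by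
    intro P y
    rw [← Finset.sum_sdiff_eq_sub (Finset.inter_subset_left)]
    congr 1
    ext a; simp [Finset.mem_sdiff, Finset.mem_inter]
  have e2 : ∀ P : Finset E, ∀ y : ℝ, (∑ e ∈ Q \ P, τ e y)
      = (∑ e ∈ Q, τ e y) - ∑ e ∈ P ∩ Q, τ e y := by
    intro P y
    rw [Finset.inter_comm, ← Finset.sum_sdiff_eq_sub (Finset.inter_subset_left)]
    congr 1
    ext a; simp [Finset.mem_sdiff, Finset.mem_inter]
  rw [e1 P₁ x, e1 P₂ x, e2 P₁ (d-x), e2 P₂ (d-x)]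
  have hP : (∑ e ∈ P₁, τ e x) ≤ ∑ e ∈ P₂, τ e x := hdom₁ x ⟨hx0, hxd⟩
  have hfx : (∑ e ∈ P₂ ∩ Q, τ e x) - (∑ e ∈ P₁ ∩ Q, τ e x)
      ≤ (∑ e ∈ P₂ ∩ Q, τ e d) - (∑ e ∈ P₁ ∩ Q, τ e d) := h1
  have hfdx : (∑ e ∈ P₂ ∩ Q, τ e (d-x)) - (∑ e ∈ P₁ ∩ Q, τ e (d-x))
      ≤ (∑ e ∈ P₂ ∩ Q, τ e d) - (∑ e ∈ P₁ ∩ Q, τ e d) := h2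
  nlinarith [mul_nonneg hx0 (sub_nonneg.2 hP),
    mul_nonneg hx0 (sub_nonneg.2 (le_trans (by linarith : (∑ e ∈ P₂ ∩ Q, τ e x) - (∑ e ∈ P₁ ∩ Q, τ e x) ≤ (∑ e ∈ P₂ ∩ Q, τ e d) - (∑ e ∈ P₁ ∩ Q, τ e d)) (le_refl _))),
    mul_nonneg (by linarith : (0:ℝ) ≤ d - x) (sub_nonneg.2 hfdx),
    mul_nonneg hx0 (sub_nonneg.2 hfx)]
end

section
/- Let d > 0 and let P₁, P₂, Q be edge sets with differentiable, non-decreasing, positive edge cost functions, such that τ_{P₁}(x) ≤ τ_{P₂}(x) and τ'_{P₁∩Q}(x) ≤ τ'_{P₂∩Q}(x) on [0,d]. Then for any x₁, x₂ ∈ [0,d] with x₁ ≤ x₂: τ_{P₁\Q}(x₁) + τ_{P₁∩Q}(d) ≤ τ_{P₂\Q}(x₂) + τ_{P₂∩Q}(d). -/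
/-- Core inequality (1): under dominance `P₁ ⪯ P₂`, for `x₁ ≤ x₂` in `[0,d]`,
`τ_{P₁\Q}(x₁) + τ_{P₁∩Q}(d) ≤ τ_{P₂\Q}(x₂) + τ_{P₂∩Q}(d)`. -/
theorem stmt_13 {E : Type*} [DecidableEq E] (d : ℝ) (hd : 0 < d)
    (P₁ P₂ Q : Finset E) (τ : E → ℝ → ℝ)
    (hdiff : ∀ e : E, Differentiable ℝ (τ e))
    (hmono : ∀ e : E, MonotoneOn (τ e) (Set.Icc 0 d))
    (hpos : ∀ e : E, ∀ x ∈ Set.Icc (0 : ℝ) d, 0 < τ e x)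
    (hdom₁ : ∀ x ∈ Set.Icc (0 : ℝ) d, (∑ e ∈ P₁, τ e x) ≤ ∑ e ∈ P₂, τ e x)
    (hdom₂ : ∀ x ∈ Set.Icc (0 : ℝ) d,
      (∑ e ∈ P₁ ∩ Q, deriv (τ e) x) ≤ ∑ e ∈ P₂ ∩ Q, deriv (τ e) x)
    (x₁ x₂ : ℝ) (hx₁ : x₁ ∈ Set.Icc (0 : ℝ) d) (hx₂ : x₂ ∈ Set.Icc (0 : ℝ) d)
    (hle : x₁ ≤ x₂) :
    (∑ e ∈ P₁ \ Q, τ e x₁) + (∑ e ∈ P₁ ∩ Q, τ e d) ≤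
      (∑ e ∈ P₂ \ Q, τ e x₂) + (∑ e ∈ P₂ ∩ Q, τ e d) := by
  -- f := τ_{P₂∩Q} - τ_{P₁∩Q} is monotone on [0,d] since f' ≥ 0
  set f : ℝ → ℝ := fun x => (∑ e ∈ P₂ ∩ Q, τ e x) - ∑ e ∈ P₁ ∩ Q, τ e x with hf
  have hdiffsum : ∀ (S : Finset E), Differentiable ℝ (fun x => ∑ e ∈ S, τ e x) := by
    intro S
    exact Differentiable.fun_sum fun e _ => hdiff e
  have hfd : Differentiable ℝ f := (hdiffsum _).sub (hdiffsum _)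
  have hderiv : ∀ (S : Finset E) (x : ℝ),
      deriv (fun x => ∑ e ∈ S, τ e x) x = ∑ e ∈ S, deriv (τ e) x := by
    intro S x
    exact deriv_fun_sum fun e _ => (hdiff e).differentiableAt
  have hfmono : MonotoneOn f (Set.Icc 0 d) := by
    apply monotoneOn_of_deriv_nonneg (convex_Icc 0 d) hfd.continuous.continuousOn
      (fun x _ => hfd.differentiableAt.differentiableWithinAt)
    intro x hx
    have hx' : x ∈ Set.Icc (0 : ℝ) d := interior_subset hx
    have : deriv f x = (∑ e ∈ P₂ ∩ Q, deriv (τ e) x) - ∑ e ∈ P₁ ∩ Q, deriv (τ e) x := by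
      rw [hf, deriv_fun_sub ((hdiffsum _).differentiableAt) ((hdiffsum _).differentiableAt),
        hderiv, hderiv]
    rw [this]
    linarith [hdom₂ x hx']
  have hdIcc : d ∈ Set.Icc (0 : ℝ) d := Set.right_mem_Icc.mpr hd.le
  have hkey : f x₁ ≤ f d := hfmono hx₁ hdIcc hx₁.2
  have hsplit : ∀ (P : Finset E) (x : ℝ),
      (∑ e ∈ P \ Q, τ e x) + (∑ e ∈ P ∩ Q, τ e x) = ∑ e ∈ P, τ e x := by
    intro P x
    rw [add_comm]
    exact Finset.sum_inter_add_sum_sdiff P Q (fun e => τ e x)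
  have hmono2 : (∑ e ∈ P₂ \ Q, τ e x₁) ≤ ∑ e ∈ P₂ \ Q, τ e x₂ :=
    Finset.sum_le_sum fun e _ => hmono e hx₁ hx₂ hle
  have h1 := hdom₁ x₁ hx₁
  have e1 := hsplit P₁ x₁
  have e2 := hsplit P₂ x₁
  simp only [hf] at hkey
  linarith
end

section
/- Let d > 0 and let P₁, P₂, Q be edge sets with differentiable, non-decreasing, positive edge cost functions, such that τ'_{P₁∩Q}(x) ≤ τ'_{P₂∩Q}(x) on [0,d]. Then for any x₁, x₂ ∈ [0,d] with x₁ ≥ x₂: τ_{Q\P₁}(d - x₁) + τ_{P₁∩Q}(d) ≤ τ_{Q\P₂}(d - x₂) + τ_{P₂∩Q}(d). -/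
/-- Core inequality (2): if `τ'_{P₁∩Q} ≤ τ'_{P₂∩Q}` on `[0,d]`, then for
`x₁ ≥ x₂` in `[0,d]`,
`τ_{Q\P₁}(d - x₁) + τ_{P₁∩Q}(d) ≤ τ_{Q\P₂}(d - x₂) + τ_{P₂∩Q}(d)`. -/
theorem stmt_14 {E : Type*} [DecidableEq E] (d : ℝ) (hd : 0 < d)
    (P₁ P₂ Q : Finset E) (τ : E → ℝ → ℝ)
    (hdiff : ∀ e : E, Differentiable ℝ (τ e))
    (hmono : ∀ e : E, MonotoneOn (τ e) (Set.Icc 0 d))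
    (hpos : ∀ e : E, ∀ x ∈ Set.Icc (0 : ℝ) d, 0 < τ e x)
    (hdom₂ : ∀ x ∈ Set.Icc (0 : ℝ) d,
      (∑ e ∈ P₁ ∩ Q, deriv (τ e) x) ≤ ∑ e ∈ P₂ ∩ Q, deriv (τ e) x)
    (x₁ x₂ : ℝ) (hx₁ : x₁ ∈ Set.Icc (0 : ℝ) d) (hx₂ : x₂ ∈ Set.Icc (0 : ℝ) d)
    (hge : x₁ ≥ x₂) :
    (∑ e ∈ Q \ P₁, τ e (d - x₁)) + (∑ e ∈ P₁ ∩ Q, τ e d) ≤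
      (∑ e ∈ Q \ P₂, τ e (d - x₂)) + (∑ e ∈ P₂ ∩ Q, τ e d) := by
  obtain ⟨hx₁0, hx₁d⟩ := hx₁
  obtain ⟨hx₂0, hx₂d⟩ := hx₂
  have hm1 : d - x₁ ∈ Set.Icc (0 : ℝ) d := ⟨by linarith, by linarith⟩
  have hm2 : d - x₂ ∈ Set.Icc (0 : ℝ) d := ⟨by linarith, by linarith⟩
  have hmd : d ∈ Set.Icc (0 : ℝ) d := ⟨le_of_lt hd, le_rfl⟩
  -- sum split
  have split : ∀ (P : Finset E) (y : ℝ),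
      (∑ e ∈ Q \ P, τ e y) = (∑ e ∈ Q, τ e y) - ∑ e ∈ P ∩ Q, τ e y := by
    intro P y
    have h : Q \ P = Q \ (P ∩ Q) := by
      ext e; simp only [Finset.mem_sdiff, Finset.mem_inter]; tauto
    rw [h, Finset.sum_sdiff_eq_sub Finset.inter_subset_right]
  -- monotonicity of Q \ P₂ sum
  have hmonoS : ∀ S : Finset E, MonotoneOn (fun x => ∑ e ∈ S, τ e x) (Set.Icc 0 d) :=
    fun S a ha b hb hab => Finset.sum_le_sum fun e _ => hmono e ha hb hab
  have A : (∑ e ∈ Q \ P₂, τ e (d - x₁)) ≤ ∑ e ∈ Q \ P₂, τ e (d - x₂) :=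
    hmonoS (Q \ P₂) hm1 hm2 (by linarith)
  -- derivative comparison: g = f₂ - f₁ monotone on [0,d]
  set g : ℝ → ℝ := fun x => (∑ e ∈ P₂ ∩ Q, τ e x) - ∑ e ∈ P₁ ∩ Q, τ e x with hg
  have hdiffS : ∀ S : Finset E, Differentiable ℝ (fun x => ∑ e ∈ S, τ e x) :=
    fun S x => DifferentiableAt.fun_sum fun e _ => (hdiff e) x
  have hgdiff : Differentiable ℝ g := (hdiffS _).sub (hdiffS _)
  have hgmono : MonotoneOn g (Set.Icc 0 d) := by
    apply monotoneOn_of_deriv_nonneg (convex_Icc 0 d) hgdiff.continuous.continuousOn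
      (hgdiff.differentiableOn)
    intro x hx
    rw [interior_Icc] at hx
    have hx' : x ∈ Set.Icc (0 : ℝ) d := ⟨le_of_lt hx.1, le_of_lt hx.2⟩
    have hd1 : deriv g x = (∑ e ∈ P₂ ∩ Q, deriv (τ e) x) - ∑ e ∈ P₁ ∩ Q, deriv (τ e) x := by
      rw [hg, deriv_fun_sub ((hdiffS _) x) ((hdiffS _) x),
        deriv_fun_sum fun e _ => (hdiff e) x, deriv_fun_sum fun e _ => (hdiff e) x]
    rw [hd1]
    linarith [hdom₂ x hx']
  have B : g (d - x₁) ≤ g d := hgmono hm1 hmd (by linarith)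
  simp only [hg] at B
  rw [split P₁, split P₂, split P₂] at *
  linarith
end

section
/- Let d > 0 and let c : [0,d] → ℝ satisfy c(d) ≤ 1 and, for all x ∈ [0,d], c(x)·(1 - c(x)) - x·c'(x) ≤ 0, with c non-decreasing, non-negative, differentiable, c(d) > 0. Let P₁ ⪯ P₂ be alternatives to Q (τ_{P₁} ≤ τ_{P₂}, τ'_{P₁∩Q} ≤ τ'_{P₂∩Q} on [0,d]) with Quotient-Model flows x_{P₁}, x_{P₂} ∈ [0,d]. If x_{P₁} ≤ x_{P₂}, x_{P₂} > 0, g_P(x) = (d-x)·c(x) + x, C_{Pᵢ} ≤ g_P(x_{Pᵢ})·(τ_{Pᵢ\Q}(x_{Pᵢ}) + τ_{Pᵢ∩Q}(d)) with equality for i = 2, then C_{P₁} ≤ C_{P₂}. -/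
/-- One case of Pareto-conformity of the Quotient Model: with `c` non-decreasing,
non-negative, differentiable, `c d ≤ 1`, `c d > 0`,
`c x (1 - c x) - x c' x ≤ 0`, dominance `P₁ ⪯ P₂`, flows `x₁ ≤ x₂` in `[0,d]`
with `x₂ > 0`, and the bounds `C_{Pᵢ} ≤ g_P(x_{Pᵢ})·(τ_{Pᵢ\Q}(x_{Pᵢ}) + τ_{Pᵢ∩Q}(d))`
holding with equality for `i = 2`, we get `C_{P₁} ≤ C_{P₂}`. -/
theorem stmt_17 {E : Type*} [DecidableEq E] (d : ℝ) (hd : 0 < d)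
    (c : ℝ → ℝ) (hcdiff : Differentiable ℝ c)
    (hcmono : MonotoneOn c (Set.Icc 0 d))
    (hcnonneg : ∀ x ∈ Set.Icc (0 : ℝ) d, 0 ≤ c x)
    (hcd1 : c d ≤ 1) (hcd0 : 0 < c d)
    (hccond : ∀ x ∈ Set.Icc (0 : ℝ) d, c x * (1 - c x) - x * deriv c x ≤ 0)
    (P₁ P₂ Q : Finset E) (τ : E → ℝ → ℝ)
    (hdiff : ∀ e : E, Differentiable ℝ (τ e))
    (hmono : ∀ e : E, MonotoneOn (τ e) (Set.Icc 0 d))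
    (hpos : ∀ e : E, ∀ x ∈ Set.Icc (0 : ℝ) d, 0 < τ e x)
    (hdom₁ : ∀ x ∈ Set.Icc (0 : ℝ) d, (∑ e ∈ P₁, τ e x) ≤ ∑ e ∈ P₂, τ e x)
    (hdom₂ : ∀ x ∈ Set.Icc (0 : ℝ) d,
      (∑ e ∈ P₁ ∩ Q, deriv (τ e) x) ≤ ∑ e ∈ P₂ ∩ Q, deriv (τ e) x)
    (x₁ x₂ : ℝ) (hx₁ : x₁ ∈ Set.Icc (0 : ℝ) d) (hx₂ : x₂ ∈ Set.Icc (0 : ℝ) d)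
    (hle : x₁ ≤ x₂) (hx₂pos : 0 < x₂)
    (C₁ C₂ : ℝ)
    (hC₁ : C₁ = x₁ * (∑ e ∈ P₁ \ Q, τ e x₁) + (d - x₁) * (∑ e ∈ Q \ P₁, τ e (d - x₁))
      + d * (∑ e ∈ P₁ ∩ Q, τ e d))
    (hC₂ : C₂ = x₂ * (∑ e ∈ P₂ \ Q, τ e x₂) + (d - x₂) * (∑ e ∈ Q \ P₂, τ e (d - x₂))
      + d * (∑ e ∈ P₂ ∩ Q, τ e d))
    (hbound₁ : C₁ ≤ ((d - x₁) * c x₁ + x₁) * ((∑ e ∈ P₁ \ Q, τ e x₁) + ∑ e ∈ P₁ ∩ Q, τ e d))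
    (hbound₂ : C₂ = ((d - x₂) * c x₂ + x₂) * ((∑ e ∈ P₂ \ Q, τ e x₂) + ∑ e ∈ P₂ ∩ Q, τ e d)) :
    C₁ ≤ C₂ := by
  obtain ⟨hx₁0, hx₁d⟩ := hx₁
  obtain ⟨hx₂0, hx₂d⟩ := hx₂
  -- g is monotone between x₁ and x₂ (direct algebra)
  have hg : (d - x₁) * c x₁ + x₁ ≤ (d - x₂) * c x₂ + x₂ := by
    have h1 : c x₁ ≤ c x₂ := hcmono ⟨hx₁0, hx₁d⟩ ⟨hx₂0, hx₂d⟩ hle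
    have h2 : c x₁ ≤ c d := hcmono ⟨hx₁0, hx₁d⟩ (Set.right_mem_Icc.2 hd.le) hx₁d
    nlinarith
  have hg2 : 0 ≤ (d - x₂) * c x₂ + x₂ := by
    have := hcnonneg x₂ ⟨hx₂0, hx₂d⟩
    nlinarith
  have hS₁nonneg : 0 ≤ (∑ e ∈ P₁ \ Q, τ e x₁) + ∑ e ∈ P₁ ∩ Q, τ e d := by
    have h1 : 0 ≤ ∑ e ∈ P₁ \ Q, τ e x₁ :=
      Finset.sum_nonneg fun e _ => (hpos e x₁ ⟨hx₁0, hx₁d⟩).le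
    have h2 : 0 ≤ ∑ e ∈ P₁ ∩ Q, τ e d :=
      Finset.sum_nonneg fun e _ => (hpos e d (Set.right_mem_Icc.2 hd.le)).le
    linarith
  -- F := Σ_{P₂∩Q} τ - Σ_{P₁∩Q} τ is monotone on [0,d]
  have hF : (∑ e ∈ P₂ ∩ Q, τ e x₂) - (∑ e ∈ P₁ ∩ Q, τ e x₂)
      ≤ (∑ e ∈ P₂ ∩ Q, τ e d) - (∑ e ∈ P₁ ∩ Q, τ e d) := by
    set F : ℝ → ℝ := fun x => (∑ e ∈ P₂ ∩ Q, τ e x) - ∑ e ∈ P₁ ∩ Q, τ e x with hFdef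
    have hFdiff : Differentiable ℝ F := by
      apply Differentiable.sub <;>
        exact Differentiable.fun_sum (fun e _ => hdiff e)
    have hFmono : MonotoneOn F (Set.Icc 0 d) := by
      apply monotoneOn_of_deriv_nonneg (convex_Icc 0 d) hFdiff.continuous.continuousOn
        (hFdiff.differentiableOn)
      intro x hx
      rw [interior_Icc] at hx
      have hx' : x ∈ Set.Icc (0:ℝ) d := ⟨hx.1.le, hx.2.le⟩
      have hder : deriv F x = (∑ e ∈ P₂ ∩ Q, deriv (τ e) x) - ∑ e ∈ P₁ ∩ Q, deriv (τ e) x := by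
        rw [hFdef]
        rw [deriv_fun_sub (by exact Differentiable.fun_sum (fun e _ => hdiff e) x)
          (by exact Differentiable.fun_sum (fun e _ => hdiff e) x)]
        rw [deriv_fun_sum (fun e _ => hdiff e x), deriv_fun_sum (fun e _ => hdiff e x)]
      rw [hder]
      linarith [hdom₂ x hx']
    have := hFmono ⟨hx₂0, hx₂d⟩ (Set.right_mem_Icc.2 hd.le) hx₂d
    simpa [hFdef] using this
  -- core inequality S₁ ≤ S₂
  have hS : (∑ e ∈ P₁ \ Q, τ e x₁) + (∑ e ∈ P₁ ∩ Q, τ e d)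
      ≤ (∑ e ∈ P₂ \ Q, τ e x₂) + ∑ e ∈ P₂ ∩ Q, τ e d := by
    have hstep : (∑ e ∈ P₁ \ Q, τ e x₁) ≤ ∑ e ∈ P₁ \ Q, τ e x₂ :=
      Finset.sum_le_sum fun e _ => hmono e ⟨hx₁0, hx₁d⟩ ⟨hx₂0, hx₂d⟩ hle
    have hsd₁ : (∑ e ∈ P₁ \ Q, τ e x₂) = (∑ e ∈ P₁, τ e x₂) - ∑ e ∈ P₁ ∩ Q, τ e x₂ := by
      rw [← Finset.sum_sdiff_eq_sub (Finset.inter_subset_left), Finset.sdiff_inter_self_left]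
    have hsd₂ : (∑ e ∈ P₂ \ Q, τ e x₂) = (∑ e ∈ P₂, τ e x₂) - ∑ e ∈ P₂ ∩ Q, τ e x₂ := by
      rw [← Finset.sum_sdiff_eq_sub (Finset.inter_subset_left), Finset.sdiff_inter_self_left]
    have hd1 := hdom₁ x₂ ⟨hx₂0, hx₂d⟩
    linarith
  calc C₁ ≤ ((d - x₁) * c x₁ + x₁) * ((∑ e ∈ P₁ \ Q, τ e x₁) + ∑ e ∈ P₁ ∩ Q, τ e d) := hbound₁
    _ ≤ ((d - x₂) * c x₂ + x₂) * ((∑ e ∈ P₂ \ Q, τ e x₂) + ∑ e ∈ P₂ ∩ Q, τ e d) :=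
        mul_le_mul hg hS hS₁nonneg hg2
    _ = C₂ := hbound₂.symm
end
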